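/- arXiv:0805.4412 — 4 statements merged into one kernel-verified Lean document; each statement's English description precedes it below -/
import Mathlib

section
/- Let B be a compact Hausdorff topological space, F a compact Hausdorff topological space, and proj : Z → B a (topological) fiber bundle with fiber F whose total space Z is Hausdorff. Suppose there exists a topological embedding e : F → ℝ^k for some k. Then there exist m ∈ ℕ and a closed topological embedding j : Z → B × ℝ^m such that Prod.fst ∘ j = proj; in particular j is fiber-preserving and restricts to a topological embedding of each fiber proj⁻¹(b) into {b} × ℝ^m. -/
open Bundle Topology Set

lemma smul_cont_aux {Z V : Type*} [TopologicalSpace Z] [AddCommMonoid V] [TopologicalSpace V]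
    [Module ℝ V] [ContinuousSMul ℝ V]
    {c : Z → ℝ} {v : Z → V} {O : Set Z} (hc : Continuous c) (hO : IsOpen O)
    (hsupp : tsupport c ⊆ O) (hv : ContinuousOn v O) :
    Continuous fun z => c z • v z := by
  rw [continuous_iff_continuousAt]
  intro z
  by_cases hz : z ∈ O
  · exact hc.continuousAt.smul ((hv z hz).continuousAt (hO.mem_nhds hz))
  · have h0 : (fun w => c w • v w) =ᶠ[nhds z] fun _ => (0 : V) := by
      have hzc : z ∈ (tsupport c)ᶜ := fun h => hz (hsupp h)
      filter_upwards [(isClosed_tsupport c).isOpen_compl.mem_nhds hzc] with w hw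
      simp [image_eq_zero_of_notMem_tsupport hw]
    exact ContinuousAt.congr continuousAt_const h0.symm


/-- A fiber bundle over a compact Hausdorff base, with compact Hausdorff fiber
embeddable in some `ℝ^k` and Hausdorff total space, admits a fiberwise closed
embedding into a trivial bundle `B × ℝ^m` over the base. -/
theorem stmt3 (B F : Type*) [TopologicalSpace B] [CompactSpace B] [T2Space B]
    [TopologicalSpace F] [CompactSpace F] [T2Space F]
    (E : B → Type*) [TopologicalSpace (TotalSpace F E)] [∀ b, TopologicalSpace (E b)]
    [FiberBundle F E] [T2Space (TotalSpace F E)]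
    (k : ℕ) (e : F → EuclideanSpace ℝ (Fin k)) (he : IsEmbedding e) :
    ∃ (m : ℕ) (j : TotalSpace F E → B × EuclideanSpace ℝ (Fin m)),
      IsClosedEmbedding j ∧ Prod.fst ∘ j = TotalSpace.proj := by
  classical
  -- finite cover of B by trivialization base sets
  obtain ⟨t, ht⟩ := isCompact_univ.elim_finite_subcover
    (fun b => (trivializationAt F E b).baseSet)
    (fun b => (trivializationAt F E b).open_baseSet)
    (fun b _ => Set.mem_iUnion.2 ⟨b, mem_baseSet_trivializationAt F E b⟩)
  set ι := {b : B // b ∈ t} with hι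
  have hcov : (Set.univ : Set B) ⊆ ⋃ i : ι, (trivializationAt F E i.1).baseSet := by
    intro x hx
    obtain ⟨b, hb, hxb⟩ := Set.mem_iUnion₂.1 (ht hx)
    exact Set.mem_iUnion.2 ⟨⟨b, hb⟩, hxb⟩
  obtain ⟨f, hf⟩ := PartitionOfUnity.exists_isSubordinate isClosed_univ
    (fun i : ι => (trivializationAt F E i.1).baseSet)
    (fun i => (trivializationAt F E i.1).open_baseSet) hcov
  set φ : ι → Trivialization F (TotalSpace.proj : TotalSpace F E → B) :=
    fun i => trivializationAt F E i.1 with hφ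
  -- for each point of B some f i is nonzero
  have hpos : ∀ b : B, ∃ i : ι, f i b ≠ 0 := by
    intro b
    by_contra h
    push_neg at h
    have := f.sum_eq_one (Set.mem_univ b)
    rw [finsum_eq_zero_of_forall_eq_zero h] at this
    norm_num at this
  -- scalar functions on total space
  set c : ι → TotalSpace F E → ℝ := fun i z => f i z.proj with hc
  have hcsupp : ∀ i, tsupport (c i) ⊆ (φ i).source := by
    intro i
    have h1 : tsupport (c i) ⊆ TotalSpace.proj ⁻¹' (tsupport (f i)) := by
      apply closure_minimal
      · intro z hz
        exact subset_closure hz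
      · exact (isClosed_tsupport (f i)).preimage (FiberBundle.continuous_proj F E)
    refine h1.trans ?_
    rw [(φ i).source_eq]
    exact Set.preimage_mono (hf i)
  -- vector part
  set v : ι → TotalSpace F E → EuclideanSpace ℝ (Fin k) := fun i z => e ((φ i z).2) with hv
  have hvcont : ∀ i, ContinuousOn (v i) (φ i).source :=
    fun i => he.continuous.comp_continuousOn (continuous_snd.comp_continuousOn (φ i).continuousOn)
  set g : TotalSpace F E → (ι → EuclideanSpace ℝ (Fin k)) := fun z i => c i z • v i z with hg
  have hgcont : Continuous g := by
    apply continuous_pi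
    intro i
    exact smul_cont_aux ((f i).continuous.comp (FiberBundle.continuous_proj F E)) (φ i).open_source
      (hcsupp i) (hvcont i)
  -- total space is compact
  have hKcomp : ∀ i : ι, IsCompact (TotalSpace.proj ⁻¹' tsupport (f i) : Set (TotalSpace F E)) := by
    intro i
    have hKc : IsCompact (tsupport (f i)) := (isClosed_tsupport _).isCompact
    have himg : (TotalSpace.proj ⁻¹' tsupport (f i) : Set (TotalSpace F E))
        = (φ i).toPartialHomeomorph.symm '' (tsupport (f i) ×ˢ Set.univ) := by
      ext z
      constructor
      · intro hz
        have hzs : z ∈ (φ i).source := by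
          rw [(φ i).mem_source]; exact hf i hz
        refine ⟨φ i z, ⟨?_, Set.mem_univ _⟩, (φ i).toPartialHomeomorph.left_inv hzs⟩
        rw [(φ i).coe_fst hzs]; exact hz
      · rintro ⟨⟨b, y⟩, ⟨hb, -⟩, rfl⟩
        have hbt : (b, y) ∈ (φ i).target := by
          rw [(φ i).mem_target]; exact hf i hb
        simp only [Set.mem_preimage, OpenPartialHomeomorph.coe_toPartialEquiv_symm]
        convert hb using 1
        exact (φ i).proj_symm_apply hbt
    rw [himg]
    refine (hKc.prod isCompact_univ).image_of_continuousOn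
      ((φ i).toPartialHomeomorph.continuousOn_symm.mono ?_)
    rw [(φ i).target_eq]
    exact Set.prod_mono (hf i) le_rfl
  haveI : CompactSpace (TotalSpace F E) := by
    refine ⟨IsCompact.of_isClosed_subset (isCompact_iUnion hKcomp) isClosed_univ ?_⟩
    intro z _
    obtain ⟨i, hi⟩ := hpos z.proj
    exact Set.mem_iUnion.2 ⟨i, subset_closure hi⟩
  -- assemble the embedding
  refine ⟨Module.finrank ℝ (ι → EuclideanSpace ℝ (Fin k)),
    fun z => (z.proj, toEuclidean (g z)), ?_, rfl⟩
  refine Continuous.isClosedEmbedding ?_ ?_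
  · exact ((FiberBundle.continuous_proj F E).prodMk (toEuclidean.continuous.comp hgcont))
  · intro z z' hzz'
    have hb : z.proj = z'.proj := congrArg Prod.fst hzz'
    have hgz : g z = g z' := toEuclidean.injective (congrArg Prod.snd hzz')
    obtain ⟨i, hi⟩ := hpos z.proj
    have hzs : z ∈ (φ i).source := by
      rw [(φ i).mem_source]; exact hf i (subset_closure hi)
    have hzs' : z' ∈ (φ i).source := by
      rw [(φ i).mem_source, ← hb]; exact hf i (subset_closure hi)
    have hci : c i z = c i z' := by simp only [hc, hb]
    have hgi : c i z • v i z = c i z' • v i z' := congrFun hgz i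
    rw [← hci] at hgi
    have hvi : v i z = v i z' := smul_right_injective _ hi hgi
    have hsnd : (φ i z).2 = (φ i z').2 := he.injective hvi
    have hfst : (φ i z).1 = (φ i z').1 := by
      rw [(φ i).coe_fst hzs, (φ i).coe_fst hzs', hb]
    exact (φ i).toOpenPartialHomeomorph.injOn hzs hzs' (Prod.ext hfst hsnd)
end

section
/- Let B be a compact Hausdorff topological space, F a compact Hausdorff topological space, and proj : Z → B a (topological) fiber bundle with fiber F whose total space Z is Hausdorff, and suppose there exists a topological embedding e : F → ℝ^k for some k. Let α : Z → ℝ be a continuous function with α(z) ≥ 0 for all z ∈ Z, and set Z₀ := α⁻¹({0}). Then there exist m ∈ ℕ and a closed topological embedding h : Z → B × ℝ^m × ℝ such that: (i) the first component of h equals proj; (ii) the last component of h equals α, so the image of h is contained in B × ℝ^m × [0,∞); (iii) h⁻¹(B × ℝ^m × {0}) = Z₀; and (iv) h restricts to a topological embedding of Z₀ into B × ℝ^m × {0}. -/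
open Bundle Topology

/-- Given a fiber bundle over a compact Hausdorff base with compact Hausdorff fiber
embeddable in `ℝ^k` and Hausdorff total space `Z`, and a continuous nonnegative
function `α : Z → ℝ` with zero set `Z₀`, there is a closed embedding
`h : Z → B × ℝ^m × ℝ` whose first component is the bundle projection and whose
last component is `α`; in particular the image of `h` lies in `B × ℝ^m × [0,∞)`,
`h⁻¹(B × ℝ^m × {0}) = Z₀`, and `h` restricts to an embedding of `Z₀` into
`B × ℝ^m × {0}`. -/
theorem stmt4 (B F : Type*) [TopologicalSpace B] [CompactSpace B] [T2Space B]
    [TopologicalSpace F] [CompactSpace F] [T2Space F]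
    (E : B → Type*) [TopologicalSpace (TotalSpace F E)] [∀ b, TopologicalSpace (E b)]
    [FiberBundle F E] [T2Space (TotalSpace F E)]
    (k : ℕ) (e : F → EuclideanSpace ℝ (Fin k)) (he : IsEmbedding e)
    (α : TotalSpace F E → ℝ) (hα : Continuous α) (hα0 : ∀ z, 0 ≤ α z) :
    ∃ (m : ℕ) (h : TotalSpace F E → B × EuclideanSpace ℝ (Fin m) × ℝ),
      IsClosedEmbedding h ∧
      (∀ z, (h z).1 = z.proj) ∧
      (∀ z, (h z).2.2 = α z) ∧
      (∀ z, 0 ≤ (h z).2.2) ∧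
      (h ⁻¹' {p | p.2.2 = 0} = α ⁻¹' {0}) ∧
      IsEmbedding ((α ⁻¹' {0}).restrict h) ∧
      (∀ z ∈ α ⁻¹' {0}, (h z).2.2 = 0) := by
  classical
  -- trivializing cover
  set U : B → Set B := fun b => (FiberBundle.trivializationAt F E b).baseSet with hUdef
  have hUopen : ∀ b, IsOpen (U b) := fun b => (FiberBundle.trivializationAt F E b).open_baseSet
  have hUcov : (Set.univ : Set B) ⊆ ⋃ b, U b := fun b _ =>
    Set.mem_iUnion.2 ⟨b, FiberBundle.mem_baseSet_trivializationAt' b⟩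
  obtain ⟨t, ht⟩ := isCompact_univ.elim_finite_subcover U hUopen hUcov
  -- partition of unity
  obtain ⟨ρ, hρ⟩ := PartitionOfUnity.exists_isSubordinate (ι := t) (s := (Set.univ : Set B))
    isClosed_univ (fun i => U (i : B)) (fun i => hUopen _)
    (by
      intro b hb
      obtain ⟨i, hi, hbi⟩ := Set.mem_iUnion₂.1 (ht hb)
      exact Set.mem_iUnion.2 ⟨⟨i, hi⟩, hbi⟩)
  set triv : t → Trivialization F (TotalSpace.proj : TotalSpace F E → B) :=
    fun i => FiberBundle.trivializationAt F E (i : B) with htriv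
  -- fiberwise functions
  set g : t → TotalSpace F E → ℝ × EuclideanSpace ℝ (Fin k) :=
    fun i z => if z.proj ∈ U (i : B) then ρ i z.proj • ((1 : ℝ), e ((triv i) z).2) else 0
    with hgdef
  have hgcont : ∀ i, Continuous (g i) := by
    intro i
    rw [continuous_iff_continuousAt]
    intro z
    by_cases hz : z.proj ∈ tsupport (ρ i)
    · -- near z, g i agrees with a continuous function on the open set proj ⁻¹' U i
      have hzU : z.proj ∈ U (i : B) := hρ i hz
      have hzsrc : z ∈ (triv i).source := (triv i).mem_source.2 hzU
      have hsrc_nhds : (triv i).source ∈ nhds z :=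
        (triv i).open_source.mem_nhds hzsrc
      have hcont' : ContinuousAt (fun z : TotalSpace F E => ρ i z.proj • ((1 : ℝ), e ((triv i) z).2)) z := by
        have h1 : ContinuousAt (fun z : TotalSpace F E => ρ i z.proj) z :=
          ((ρ i).continuous.comp (FiberBundle.continuous_proj F E)).continuousAt
        have h2 : ContinuousAt (triv i) z := (triv i).continuousOn.continuousAt hsrc_nhds
        exact h1.smul (continuousAt_const.prodMk ((he.continuous.continuousAt).comp h2.snd))
      refine hcont'.congr ?_
      filter_upwards [((hUopen (i : B)).preimage
        (FiberBundle.continuous_proj F E)).mem_nhds hzU] with x hx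
      exact (if_pos hx).symm
    · -- near z, g i is 0
      have hCn : (TotalSpace.proj ⁻¹' (tsupport (ρ i))ᶜ : Set (TotalSpace F E)) ∈ nhds z :=
        ((isClosed_tsupport (ρ i)).isOpen_compl.preimage
          (FiberBundle.continuous_proj F E)).mem_nhds hz
      have : ContinuousAt (fun _ : TotalSpace F E => (0 : ℝ × EuclideanSpace ℝ (Fin k))) z :=
        continuousAt_const
      refine this.congr ?_
      filter_upwards [hCn] with x hx
      have hx0 : ρ i x.proj = 0 := image_eq_zero_of_notMem_tsupport hx
      simp only [hgdef, hx0, zero_smul, ite_self]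
  -- the total space is compact
  haveI : CompactSpace (TotalSpace F E) := by
    rw [← isCompact_univ_iff]
    have hcover : (Set.univ : Set (TotalSpace F E)) ⊆ ⋃ i : t, TotalSpace.proj ⁻¹' tsupport (ρ i) := by
      intro z _
      have hsum := ρ.sum_eq_one (Set.mem_univ z.proj)
      by_contra hno
      simp only [Set.mem_iUnion, Set.mem_preimage, not_exists] at hno
      have : ∀ i : t, ρ i z.proj = 0 := fun i =>
        image_eq_zero_of_notMem_tsupport (hno i)
      rw [finsum_eq_zero_of_forall_eq_zero this] at hsum
      exact zero_ne_one hsum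
    have hcpt : ∀ i : t, IsCompact (TotalSpace.proj ⁻¹' tsupport (ρ i) : Set (TotalSpace F E)) := by
      intro i
      have hsub : tsupport (ρ i) ⊆ U (i : B) := hρ i
      have himg : (TotalSpace.proj ⁻¹' tsupport (ρ i) : Set (TotalSpace F E)) =
          (triv i).toOpenPartialHomeomorph.symm '' (tsupport (ρ i) ×ˢ Set.univ) := by
        ext z
        constructor
        · intro hz
          have hzsrc : z ∈ (triv i).source := (triv i).mem_source.2 (hsub hz)
          refine ⟨(triv i) z, ?_, (triv i).toOpenPartialHomeomorph.left_inv hzsrc⟩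
          refine Set.mem_prod.2 ⟨?_, Set.mem_univ _⟩
          rw [(triv i).coe_fst hzsrc]; exact hz
        · rintro ⟨p, hp, rfl⟩
          have hpt : p ∈ (triv i).target := by
            rw [(triv i).target_eq]
            exact ⟨hsub hp.1, Set.mem_univ _⟩
          have := (triv i).proj_symm_apply hpt
          simpa [this] using hp.1
      rw [himg]
      refine IsCompact.image_of_continuousOn ?_ ?_
      · exact ((isClosed_tsupport (ρ i)).isCompact).prod isCompact_univ
      · refine ((triv i).toOpenPartialHomeomorph.continuousOn_symm).mono ?_
        rw [(triv i).target_eq]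
        exact Set.prod_mono hsub (le_refl _)
    have := isCompact_iUnion hcpt
    exact this.of_isClosed_subset isClosed_univ
      (Set.univ_subset_iff.1 hcover ▸ le_refl _) |>.of_isClosed_subset isClosed_univ
      (le_refl _)
  -- assemble the map
  set V := t → ℝ × EuclideanSpace ℝ (Fin k)
  set G : TotalSpace F E → V := fun z i => g i z with hGdef
  have hGcont : Continuous G := continuous_pi fun i => hgcont i
  refine ⟨Module.finrank ℝ V, fun z => (z.proj, toEuclidean (G z), α z), ?_, ?_, ?_, ?_, ?_, ?_, ?_⟩
  · -- closed embedding
    have hcont : Continuous (fun z : TotalSpace F E => (z.proj, toEuclidean (G z), α z)) :=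
      (FiberBundle.continuous_proj F E).prodMk
        ((toEuclidean.continuous.comp hGcont).prodMk hα)
    refine hcont.isClosedEmbedding ?_
    intro z z' hzz'
    have hproj : z.proj = z'.proj := congrArg Prod.fst hzz'
    have hG : G z = G z' := toEuclidean.injective (congrArg (fun p => p.2.1) hzz')
    -- pick i with ρ i (z.proj) ≠ 0
    have hsum := ρ.sum_eq_one (Set.mem_univ z.proj)
    have hex : ∃ i : t, ρ i z.proj ≠ 0 := by
      by_contra hno
      push_neg at hno
      rw [finsum_eq_zero_of_forall_eq_zero hno] at hsum
      exact zero_ne_one hsum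
    obtain ⟨i, hi⟩ := hex
    have hmem : z.proj ∈ U (i : B) := hρ i (subset_tsupport _ hi)
    have hmem' : z'.proj ∈ U (i : B) := hproj ▸ hmem
    have hzsrc : z ∈ (triv i).source := (triv i).mem_source.2 hmem
    have hzsrc' : z' ∈ (triv i).source := (triv i).mem_source.2 hmem'
    have hgi : g i z = g i z' := congrFun hG i
    rw [hgdef] at hgi
    simp only [if_pos hmem, if_pos hmem'] at hgi
    rw [hproj] at hgi
    have hsmul : ((1 : ℝ), e ((triv i) z).2) = ((1 : ℝ), e ((triv i) z').2) := by
      have hi' : ρ i z'.proj ≠ 0 := by rw [← hproj]; exact hi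
      exact smul_right_injective (ℝ × EuclideanSpace ℝ (Fin k)) hi' hgi
    have hsnd : ((triv i) z).2 = ((triv i) z').2 :=
      he.injective (congrArg Prod.snd hsmul)
    have hfst : ((triv i) z).1 = ((triv i) z').1 := by
      rw [(triv i).coe_fst hzsrc, (triv i).coe_fst hzsrc', hproj]
    exact (triv i).toOpenPartialHomeomorph.injOn hzsrc hzsrc' (Prod.ext hfst hsnd)
  · intro z; rfl
  · intro z; rfl
  · intro z; exact hα0 z
  · ext z; simp
  · -- restriction is an embedding
    have hcont : Continuous (fun z : TotalSpace F E => (z.proj, toEuclidean (G z), α z)) :=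
      (FiberBundle.continuous_proj F E).prodMk
        ((toEuclidean.continuous.comp hGcont).prodMk hα)
    have hinj : Function.Injective (fun z : TotalSpace F E => (z.proj, toEuclidean (G z), α z)) := by
      intro z z' hzz'
      have hproj : z.proj = z'.proj := congrArg Prod.fst hzz'
      have hG : G z = G z' := toEuclidean.injective (congrArg (fun p => p.2.1) hzz')
      have hsum := ρ.sum_eq_one (Set.mem_univ z.proj)
      have hex : ∃ i : t, ρ i z.proj ≠ 0 := by
        by_contra hno
        push_neg at hno
        rw [finsum_eq_zero_of_forall_eq_zero hno] at hsum
        exact zero_ne_one hsum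
      obtain ⟨i, hi⟩ := hex
      have hmem : z.proj ∈ U (i : B) := hρ i (subset_tsupport _ hi)
      have hmem' : z'.proj ∈ U (i : B) := hproj ▸ hmem
      have hzsrc : z ∈ (triv i).source := (triv i).mem_source.2 hmem
      have hzsrc' : z' ∈ (triv i).source := (triv i).mem_source.2 hmem'
      have hgi : g i z = g i z' := congrFun hG i
      rw [hgdef] at hgi
      simp only [if_pos hmem, if_pos hmem'] at hgi
      rw [hproj] at hgi
      have hsmul : ((1 : ℝ), e ((triv i) z).2) = ((1 : ℝ), e ((triv i) z').2) := by
        have hi' : ρ i z'.proj ≠ 0 := by rw [← hproj]; exact hi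
        exact smul_right_injective (ℝ × EuclideanSpace ℝ (Fin k)) hi' hgi
      have hsnd : ((triv i) z).2 = ((triv i) z').2 :=
        he.injective (congrArg Prod.snd hsmul)
      have hfst : ((triv i) z).1 = ((triv i) z').1 := by
        rw [(triv i).coe_fst hzsrc, (triv i).coe_fst hzsrc', hproj]
      exact (triv i).toOpenPartialHomeomorph.injOn hzsrc hzsrc' (Prod.ext hfst hsnd)
    exact (hcont.isClosedEmbedding hinj).isEmbedding.comp IsEmbedding.subtypeVal
  · intro z hz
    simpa using hz
end

section
/- Let X be a compact smooth manifold with boundary (a manifold modelled on a model with corners I over ℝⁿ, with boundary ∂X = I.boundary X). Let i : X → ℝ^m be a smooth map that is injective and whose differential mfderiv I at every point of X is injective, and let α : X → ℝ be a smooth function with α(x) ≥ 0 for all x ∈ X and α⁻¹({0}) = ∂X. Then the map h : X → ℝ^m × ℝ, h(x) = (i(x), α(x)), satisfies: (i) h is injective and a topological embedding; (ii) the differential of h at every point of X is injective; (iii) h(X) ⊆ ℝ^m × [0,∞); (iv) h⁻¹(ℝ^m × {0}) = ∂X; and (v) h restricts to a topological embedding of ∂X into ℝ^m × {0} that is smooth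 with everywhere injective differential. -/
open Topology
open scoped Manifold

/-- Fiberwise content of Proposition 4.2: if `i : X → ℝ^m` is a smooth injective
map with everywhere injective differential on a compact manifold with boundary `X`,
and `α : X → ℝ` is a smooth nonnegative boundary defining function
(`α⁻¹(0) = ∂X`), then `h = (i, α) : X → ℝ^m × ℝ` is a neat embedding:
it is an injective topological embedding with everywhere injective differential,
its image lies in the half-space `ℝ^m × [0,∞)`, it pulls `ℝ^m × {0}` back to
`∂X`, and it restricts on `∂X` to a topological embedding into `ℝ^m × {0}` which
is smooth with everywhere injective differential. -/
theorem stmt5 {n : ℕ} {H : Type*} [TopologicalSpace H]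
    (I : ModelWithCorners ℝ (EuclideanSpace ℝ (Fin n)) H)
    {X : Type*} [TopologicalSpace X] [T2Space X] [ChartedSpace H X]
    [IsManifold I (⊤ : ℕ∞) X] [CompactSpace X]
    {m : ℕ} (i : X → EuclideanSpace ℝ (Fin m))
    (hi : ContMDiff I 𝓘(ℝ, EuclideanSpace ℝ (Fin m)) (⊤ : ℕ∞) i)
    (hiinj : Function.Injective i)
    (hdi : ∀ x : X, Function.Injective (mfderiv I 𝓘(ℝ, EuclideanSpace ℝ (Fin m)) i x))
    (α : X → ℝ) (hα : ContMDiff I 𝓘(ℝ, ℝ) (⊤ : ℕ∞) α)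
    (hα0 : ∀ x, 0 ≤ α x) (hαb : α ⁻¹' {0} = I.boundary X) :
    Function.Injective (fun x : X => (i x, α x)) ∧
    IsEmbedding (fun x : X => (i x, α x)) ∧
    (∀ x : X, Function.Injective
      (mfderiv I 𝓘(ℝ, EuclideanSpace ℝ (Fin m) × ℝ) (fun x : X => (i x, α x)) x)) ∧
    (∀ x : X, 0 ≤ ((i x, α x) : EuclideanSpace ℝ (Fin m) × ℝ).2) ∧
    ((fun x : X => (i x, α x)) ⁻¹' {p : EuclideanSpace ℝ (Fin m) × ℝ | p.2 = 0}
      = I.boundary X) ∧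
    IsEmbedding ((I.boundary X).restrict fun x : X => (i x, α x)) ∧
    (∀ x ∈ I.boundary X, α x = 0) ∧
    ContMDiffOn I 𝓘(ℝ, EuclideanSpace ℝ (Fin m) × ℝ) (⊤ : ℕ∞) (fun x : X => (i x, α x))
      (I.boundary X) ∧
    (∀ x ∈ I.boundary X, Function.Injective
      (mfderiv I 𝓘(ℝ, EuclideanSpace ℝ (Fin m) × ℝ) (fun x : X => (i x, α x)) x)) := by

  have hh : ContMDiff I 𝓘(ℝ, EuclideanSpace ℝ (Fin m) × ℝ) (⊤ : ℕ∞) (fun x : X => (i x, α x)) :=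
    hi.prodMk_space hα
  have hinj : Function.Injective (fun x : X => (i x, α x)) := by
    intro a b hab
    exact hiinj (congrArg Prod.fst hab)
  have hemb : IsEmbedding (fun x : X => (i x, α x)) :=
    (hh.continuous.isClosedEmbedding hinj).isEmbedding
  have hd : ∀ x : X, Function.Injective
      (mfderiv I 𝓘(ℝ, EuclideanSpace ℝ (Fin m) × ℝ) (fun x : X => (i x, α x)) x) := by
    intro x
    have h1 : MDifferentiableAt I 𝓘(ℝ, EuclideanSpace ℝ (Fin m)) i x :=
      (hi x).mdifferentiableAt (by simp)
    have h2 : MDifferentiableAt I 𝓘(ℝ, ℝ) α x := (hα x).mdifferentiableAt (by simp)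
    have hfst : MDifferentiableAt 𝓘(ℝ, EuclideanSpace ℝ (Fin m) × ℝ)
        𝓘(ℝ, EuclideanSpace ℝ (Fin m))
        (Prod.fst : EuclideanSpace ℝ (Fin m) × ℝ → EuclideanSpace ℝ (Fin m))
        (i x, α x) :=
      differentiable_fst.differentiableAt.mdifferentiableAt
    have key : mfderiv I 𝓘(ℝ, EuclideanSpace ℝ (Fin m)) i x =
        (ContinuousLinearMap.fst ℝ (EuclideanSpace ℝ (Fin m)) ℝ).comp
          (mfderiv I 𝓘(ℝ, EuclideanSpace ℝ (Fin m) × ℝ) (fun x : X => (i x, α x)) x) := by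
      have heq : i = Prod.fst ∘ (fun x : X => (i x, α x)) := rfl
      rw [heq, mfderiv_comp x hfst ((hh x).mdifferentiableAt (by simp))]
      congr 1
      rw [mfderiv_eq_fderiv, fderiv_fst]
    intro v w hvw
    apply hdi x
    rw [key]
    exact congrArg (ContinuousLinearMap.fst ℝ (EuclideanSpace ℝ (Fin m)) ℝ) hvw
  have hpre : (fun x : X => (i x, α x)) ⁻¹' {p : EuclideanSpace ℝ (Fin m) × ℝ | p.2 = 0}
      = I.boundary X := hαb
  refine ⟨hinj, hemb, hd, fun x => hα0 x, hpre,
    hemb.comp IsEmbedding.subtypeVal, ?_, hh.contMDiffOn, fun x _ => hd x⟩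
  intro x hx
  have : x ∈ α ⁻¹' {0} := hαb ▸ hx
  exact this
end

section
/- Let X be a compact smooth manifold with boundary (a manifold modelled on a model with corners I over ℝⁿ, with boundary ∂X = I.boundary X). Then there exists a smooth function α : X → ℝ with 0 ≤ α(x) ≤ 1 for all x ∈ X and α⁻¹({0}) = ∂X; in particular α is strictly positive exactly on the interior of X. -/
open scoped Manifold
open Set OpenPartialHomeomorph
open scoped ContDiff

section Aux

variable {E : Type*} [NormedAddCommGroup E] [NormedSpace ℝ E]
  [FiniteDimensional ℝ E] [CompleteSpace E]
  {H : Type*} [TopologicalSpace H] {I : ModelWithCorners ℝ E H}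
  {X : Type*} [TopologicalSpace X] [ChartedSpace H X]
  [IsManifold I ∞ X]

/-- Chart-independence of interior points: if some chart maps `y` to an interior
point of `range I`, then `y` is an interior point. -/
lemma aux_isInteriorPoint_of_chart {c y : X} (hy : y ∈ (extChartAt I c).source)
    (h : extChartAt I c y ∈ interior (Set.range I)) : I.IsInteriorPoint y := by
  set f : OpenPartialHomeomorph X H := chartAt H c with hf
  set g : OpenPartialHomeomorph X H := chartAt H y with hg
  have hyf : y ∈ f.source := by rwa [extChartAt_source] at hy
  have hyg : y ∈ g.source := mem_chart_source H y
  have hfA : f ∈ IsManifold.maximalAtlas I ∞ X :=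
    IsManifold.chart_mem_maximalAtlas c
  have hgA : g ∈ IsManifold.maximalAtlas I ∞ X :=
    IsManifold.chart_mem_maximalAtlas y
  set τ : E → E := (g.extend I) ∘ (f.extend I).symm with hτdef
  set σ : E → E := (f.extend I) ∘ (g.extend I).symm with hσdef
  set p : E := f.extend I y with hp
  set q : E := g.extend I y with hq
  have hone : (∞ : WithTop ℕ∞) ≠ 0 := by simp
  have hpI : p ∈ interior (Set.range I) := h
  have hrange_nhds : Set.range I ∈ nhds p :=
    Filter.mem_of_superset (isOpen_interior.mem_nhds hpI) interior_subset
  -- τ is smooth at p (full neighborhood, since p is interior)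
  have hτw := contDiffWithinAt_extend_coord_change' hfA hgA hyf hyg
  have hτ : ContDiffAt ℝ ∞ τ p := hτw.contDiffAt hrange_nhds
  have hσ : ContDiffWithinAt ℝ ∞ σ (Set.range I) q :=
    contDiffWithinAt_extend_coord_change' hgA hfA hyg hyf
  -- the transition source sets
  set s : Set E := ((f.extend I).symm ≫ g.extend I).source with hs_def
  set t : Set E := ((g.extend I).symm ≫ f.extend I).source with ht_def
  have hs_nhdsW : s ∈ nhdsWithin p (Set.range I) :=
    extend_coord_change_source_mem_nhdsWithin' (I := I) (e := f) (e' := g) hyf hyg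
  have hs_nhds : s ∈ nhds p := by
    rwa [nhdsWithin_eq_nhds.2 hrange_nhds] at hs_nhdsW
  have ht_nhdsW : t ∈ nhdsWithin q (Set.range I) :=
    extend_coord_change_source_mem_nhdsWithin' (I := I) (e := g) (e' := f) hyg hyf
  have hps : p ∈ s := mem_of_mem_nhds hs_nhds
  -- basic membership facts for x ∈ s
  have hs_mem : ∀ x ∈ s, x ∈ (f.extend I).target ∧ (f.extend I).symm x ∈ (g.extend I).source := by
    intro x hx
    rw [hs_def, PartialEquiv.trans_source] at hx
    exact ⟨hx.1, hx.2⟩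
  have ht_mem : ∀ x ∈ t, x ∈ (g.extend I).target ∧ (g.extend I).symm x ∈ (f.extend I).source := by
    intro x hx
    rw [ht_def, PartialEquiv.trans_source] at hx
    exact ⟨hx.1, hx.2⟩
  -- σ ∘ τ = id on s, and τ maps s into range I
  have hστ : ∀ x ∈ s, σ (τ x) = x := by
    intro x hx
    obtain ⟨hx1, hx2⟩ := hs_mem x hx
    simp only [hσdef, hτdef, Function.comp_apply]
    rw [(g.extend I).left_inv hx2, (f.extend I).right_inv hx1]
  have hτmaps : Set.MapsTo τ s (Set.range I) := by
    intro x hx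
    obtain ⟨hx1, hx2⟩ := hs_mem x hx
    exact g.extend_target_subset_range ((g.extend I).map_source hx2)
  -- τ ∘ σ = id on t
  have hτσ : ∀ x ∈ t, τ (σ x) = x := by
    intro x hx
    obtain ⟨hx1, hx2⟩ := ht_mem x hx
    simp only [hσdef, hτdef, Function.comp_apply]
    rw [(f.extend I).left_inv hx2, (g.extend I).right_inv hx1]
  -- key equalities: τ p = q and σ q = p
  have hτp : τ p = q := by
    simp only [hτdef, Function.comp_apply, hp, hq, (f.extend I).left_inv
      (by rwa [f.extend_source])]
  have hσq : σ q = p := by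
    simp only [hσdef, Function.comp_apply, hp, hq, (g.extend I).left_inv
      (by rwa [g.extend_source])]
  have hqrange : q ∈ Set.range I :=
    g.extend_target_subset_range ((g.extend I).map_source (by rwa [g.extend_source]))
  have hqt : q ∈ t := mem_of_mem_nhdsWithin hqrange ht_nhdsW
  -- the derivatives
  set A : E →L[ℝ] E := fderiv ℝ τ p with hA_def
  have hA : HasFDerivAt τ A p := (hτ.differentiableAt hone).hasFDerivAt
  set B : E →L[ℝ] E := fderivWithin ℝ σ (Set.range I) q with hB_def
  have hB : HasFDerivWithinAt σ B (Set.range I) q :=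
    (hσ.differentiableWithinAt hone).hasFDerivWithinAt
  -- B ∘ A = id
  have hBA : B.comp A = ContinuousLinearMap.id ℝ E := by
    have hB' : HasFDerivWithinAt σ B (Set.range I) (τ p) := by rw [hτp]; exact hB
    have hcomp : HasFDerivWithinAt (σ ∘ τ) (B.comp A) s p :=
      hB'.comp p hA.hasFDerivWithinAt hτmaps
    have hcomp' : HasFDerivAt (σ ∘ τ) (B.comp A) p := hcomp.hasFDerivAt hs_nhds
    have hid : HasFDerivAt (σ ∘ τ) (ContinuousLinearMap.id ℝ E) p := by
      refine (hasFDerivAt_id p).congr_of_eventuallyEq ?_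
      filter_upwards [hs_nhds] with x hx
      exact hστ x hx
    exact hcomp'.unique hid
  -- A ∘ B = id
  have hAB : A.comp B = ContinuousLinearMap.id ℝ E := by
    have hA' : HasFDerivAt τ A (σ q) := by rw [hσq]; exact hA
    have hcomp : HasFDerivWithinAt (τ ∘ σ) (A.comp B) (Set.range I) q :=
      hA'.comp_hasFDerivWithinAt q hB
    have hid : HasFDerivWithinAt (τ ∘ σ) (ContinuousLinearMap.id ℝ E) (Set.range I) q := by
      have hidq : HasFDerivWithinAt (id : E → E) (ContinuousLinearMap.id ℝ E)
        (Set.range I) q := (hasFDerivAt_id q).hasFDerivWithinAt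
      refine hidq.congr_of_eventuallyEq ?_ ?_
      · filter_upwards [ht_nhdsW] with x hx
        exact hτσ x hx
      · exact hτσ q hqt
    exact (I.uniqueDiffOn q hqrange).eq hcomp hid
  -- A is a continuous linear equivalence
  let e : E ≃L[ℝ] E := ContinuousLinearEquiv.equivOfInverse A B
    (fun x => by
      have hx : (B.comp A) x = x := by rw [hBA]; rfl
      simpa using hx)
    (fun x => by
      have hx : (A.comp B) x = x := by rw [hAB]; rfl
      simpa using hx)
  have hstrict : HasStrictFDerivAt τ (e : E →L[ℝ] E) p := by
    have hcoe : (e : E →L[ℝ] E) = A := rfl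
    rw [hcoe, hA_def]
    exact hτ.hasStrictFDerivAt hone
  have hmap : Filter.map τ (nhds p) = nhds q := by
    rw [← hτp]
    exact hstrict.map_nhds_eq_of_equiv
  have hq_int : Set.range I ∈ nhds q := by
    rw [← hmap, Filter.mem_map]
    exact Filter.mem_of_superset hs_nhds (fun x hx => hτmaps hx)
  exact mem_interior_iff_mem_nhds.2 hq_int

/-- The interior of a manifold is open. -/
lemma aux_isOpen_interior : IsOpen (I.interior X) := by
  rw [isOpen_iff_mem_nhds]
  intro x hx
  have hx' : extChartAt I x x ∈ interior (Set.range I) := hx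
  have hopen : IsOpen ((extChartAt I x).source ∩
      extChartAt I x ⁻¹' interior (Set.range I)) :=
    (continuousOn_extChartAt x).isOpen_inter_preimage (isOpen_extChartAt_source x)
      isOpen_interior
  refine Filter.mem_of_superset (hopen.mem_nhds ⟨mem_extChartAt_source x, hx'⟩) ?_
  rintro y ⟨hy1, hy2⟩
  exact aux_isInteriorPoint_of_chart hy1 hy2

/-- The boundary of a manifold is closed. -/
lemma aux_isClosed_boundary : IsClosed (I.boundary X) := by
  rw [← I.compl_interior]
  exact aux_isOpen_interior.isClosed_compl

end Aux

/-- On a compact smooth manifold with boundary there is a smooth function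
`α : X → ℝ` with values in `[0,1]` whose zero set is exactly the boundary;
in particular `α` is strictly positive exactly on the interior. -/
theorem stmt6 {n : ℕ} {H : Type*} [TopologicalSpace H]
    (I : ModelWithCorners ℝ (EuclideanSpace ℝ (Fin n)) H)
    (X : Type*) [TopologicalSpace X] [T2Space X] [ChartedSpace H X]
    [IsManifold I (⊤ : ℕ∞) X] [CompactSpace X] :
    ∃ α : X → ℝ, ContMDiff I 𝓘(ℝ, ℝ) (⊤ : ℕ∞) α ∧
      (∀ x, α x ∈ Set.Icc (0:ℝ) 1) ∧
      α ⁻¹' {0} = I.boundary X ∧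
      ∀ x, 0 < α x ↔ x ∈ I.interior X := by
  obtain ⟨f, hf_smooth, hf_range, hf0, hf1⟩ :=
    exists_contMDiff_zero_iff_one_iff_of_isClosed I
      (aux_isClosed_boundary (I := I) (X := X)) isClosed_empty (Set.disjoint_empty _)
  refine ⟨f, hf_smooth, fun x => hf_range (Set.mem_range_self x), ?_, ?_⟩
  · ext x
    simp only [Set.mem_preimage, Set.mem_singleton_iff]
    exact ⟨fun h => (hf0 x).2 h, fun h => (hf0 x).1 h⟩
  · intro x
    have h0 : (0:ℝ) ≤ f x := (hf_range (Set.mem_range_self x)).1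
    constructor
    · intro hpos
      rw [← I.compl_boundary]
      intro hb
      rw [(hf0 x).1 hb] at hpos
      exact lt_irrefl 0 hpos
    · intro hint
      rcases h0.lt_or_eq with h | h
      · exact h
      · exfalso
        have hb : x ∈ I.boundary X := (hf0 x).2 h.symm
        exact (I.disjoint_interior_boundary).le_bot ⟨hint, hb⟩
end
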